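/- In a stochastic game, player 1 is almost-sure weakly synchronizing in T from state q in G if and only if for every p ≥ 1 there exists 0 ≤ i ≤ p−1 such that player 1 is almost-sure weakly synchronizing in T × {0} from ⟨q, i⟩ in the counter game G × [p]. -/

import Mathlib

open Finset

/-- A two-player stochastic game: transition kernel `δ q a b q'`. -/
structure Game (Q A : Type) where
  δ : Q → A → A → Q → ℝ

/-- Validity of the transition kernel: a probability distribution on `Q` for each `q,a,b`. -/
def IsGame {Q A : Type} [Fintype Q] (G : Game Q A) : Prop :=
  (∀ q a b q', 0 ≤ G.δ q a b q') ∧ (∀ q a b, (∑ q' : Q, G.δ q a b q') = 1)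

/-- A probability distribution over a finite set. -/
def IsDist {Q : Type} [Fintype Q] (d : Q → ℝ) : Prop :=
  (∀ q, 0 ≤ d q) ∧ (∑ q : Q, d q) = 1

/-- Randomized player-1 strategies: map (reversed) state histories to distributions on actions. -/
abbrev Strat1 (Q A : Type) := List Q → A → ℝ
/-- Randomized player-2 strategies: also see the action chosen by player 1. -/
abbrev Strat2 (Q A : Type) := List Q → A → A → ℝ

def IsStrat1 {Q A : Type} [Fintype A] (σ : Strat1 Q A) : Prop :=
  ∀ h, (∀ a, 0 ≤ σ h a) ∧ (∑ a : A, σ h a) = 1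

def IsStrat2 {Q A : Type} [Fintype A] (τ : Strat2 Q A) : Prop :=
  ∀ h a, (∀ b, 0 ≤ τ h a b) ∧ (∑ b : A, τ h a b) = 1

/-- Probability of a finite state history (in reverse chronological order:
the head is the current state), with the actions marginalized out. -/
def hprob {Q A : Type} [Fintype A] (G : Game Q A) (d0 : Q → ℝ)
    (σ : Strat1 Q A) (τ : Strat2 Q A) : List Q → ℝ
  | [] => 1
  | [q] => d0 q
  | q :: q' :: h =>
      (∑ a : A, ∑ b : A, σ (q' :: h) a * τ (q' :: h) a b * G.δ q' a b q) *
        hprob G d0 σ τ (q' :: h)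

/-- The outcome sequence of distributions: probability to be in state `q` after `i` rounds. -/
def outSeq {Q A : Type} [Fintype Q] [Fintype A] (G : Game Q A) (d0 : Q → ℝ)
    (σ : Strat1 Q A) (τ : Strat2 Q A) (i : ℕ) (q : Q) : ℝ :=
  ∑ h : Fin i → Q, hprob G d0 σ τ (q :: (List.ofFn h).reverse)

/-- Probability mass of a set of states. -/
def mass {Q : Type} (d : Q → ℝ) (T : Finset Q) : ℝ := ∑ q ∈ T, d q

/-- The four synchronizing modes, on a sequence of probability masses. -/
def AlwaysSync (m : ℕ → ℝ) (ε : ℝ) : Prop := ∀ i, 1 - ε ≤ m i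
def EventSync (m : ℕ → ℝ) (ε : ℝ) : Prop := ∃ i, 1 - ε ≤ m i
def WeaklySync (m : ℕ → ℝ) (ε : ℝ) : Prop := ∀ N, ∃ i, N ≤ i ∧ 1 - ε ≤ m i
def StronglySync (m : ℕ → ℝ) (ε : ℝ) : Prop := ∃ N, ∀ i, N ≤ i → 1 - ε ≤ m i

/-- Sure winning region for a synchronizing mode `sync`: some player-1 strategy ensures
`1`-synchronization against all player-2 strategies. -/
def SureWin {Q A : Type} [Fintype Q] [Fintype A] (G : Game Q A) (T : Finset Q)
    (sync : (ℕ → ℝ) → ℝ → Prop) : Set (Q → ℝ) :=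
  {d0 | IsDist d0 ∧ ∃ σ, IsStrat1 σ ∧ ∀ τ, IsStrat2 τ →
    sync (fun i => mass (outSeq G d0 σ τ i) T) 0}

/-- Almost-sure winning region for a synchronizing mode `sync`: some player-1 strategy
ensures `(1-ε)`-synchronization for all `ε > 0` against all player-2 strategies. -/
def ASWin {Q A : Type} [Fintype Q] [Fintype A] (G : Game Q A) (T : Finset Q)
    (sync : (ℕ → ℝ) → ℝ → Prop) : Set (Q → ℝ) :=
  {d0 | IsDist d0 ∧ ∃ σ, IsStrat1 σ ∧ ∀ τ, IsStrat2 τ →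
    ∀ ε : ℝ, 0 < ε → sync (fun i => mass (outSeq G d0 σ τ i) T) ε}

/-- Dirac distribution. -/
def dirac {Q : Type} [DecidableEq Q] (q : Q) : Q → ℝ := fun q' => if q' = q then 1 else 0

/-- The counter game `G × [p]`: the tracking counter is decremented modulo `p` along
every transition. -/
def counterGame {Q A : Type} (G : Game Q A) (p : ℕ) : Game (Q × Fin p) A where
  δ := fun x a b y => if (y.2 : ℕ) = ((x.2 : ℕ) + p - 1) % p then G.δ x.1 a b y.1 else 0

namespace AS12Aux

open List

lemma ofFn_reverse_succ {α : Type*} (n : ℕ) (f : Fin (n+1) → α) :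
    (List.ofFn f).reverse = f (Fin.last n) :: (List.ofFn (Fin.init f)).reverse := by
  rw [List.ofFn_succ']
  simp only [List.concat_eq_append, List.reverse_append, List.reverse_cons, List.reverse_nil,
    List.nil_append, List.cons_append]
  rfl

/-- Split off the last coordinate of `Fin (t+1) → α`. -/
def snocEquiv (t : ℕ) (α : Type*) : (Fin (t+1) → α) ≃ α × (Fin t → α) where
  toFun h := (h (Fin.last t), Fin.init h)
  invFun p := Fin.snoc p.2 p.1
  left_inv h := Fin.snoc_init_self h
  right_inv p := by
    refine Prod.ext ?_ ?_
    · simp [Fin.snoc_last]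
    · funext j; simp [Fin.init, Fin.snoc_castSucc]

section Basic

variable {Q A : Type} [Fintype Q] [Fintype A] (G : Game Q A) (d0 : Q → ℝ)
  (σ : Strat1 Q A) (τ : Strat2 Q A)

omit [Fintype Q] in
lemma hprob_nonneg (hG : ∀ q a b q', 0 ≤ G.δ q a b q') (hd : ∀ q, 0 ≤ d0 q)
    (hσ : ∀ h a, 0 ≤ σ h a) (hτ : ∀ h a b, 0 ≤ τ h a b) :
    ∀ l, 0 ≤ hprob G d0 σ τ l := by
  intro l
  induction l with
  | nil => simp [hprob]
  | cons x l ih =>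
    match l with
    | [] => exact hd x
    | y :: l' =>
      rw [hprob]
      refine mul_nonneg (Finset.sum_nonneg fun a _ => Finset.sum_nonneg fun b _ => ?_)
        (by simpa [hprob] using ih)
      exact mul_nonneg (mul_nonneg (hσ _ _) (hτ _ _ _)) (hG _ _ _ _)

lemma sum_hprob_cons (hG : IsGame G) (hσ : IsStrat1 σ) (hτ : IsStrat2 τ)
    (y : Q) (l : List Q) :
    ∑ x : Q, hprob G d0 σ τ (x :: y :: l) = hprob G d0 σ τ (y :: l) := by
  have hx : ∀ x, hprob G d0 σ τ (x :: y :: l) =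
      (∑ a : A, ∑ b : A, σ (y :: l) a * τ (y :: l) a b * G.δ y a b x) *
        hprob G d0 σ τ (y :: l) := fun x => rfl
  simp only [hx]
  rw [← Finset.sum_mul]
  have h2 : (∑ x : Q, ∑ a : A, ∑ b : A, σ (y :: l) a * τ (y :: l) a b * G.δ y a b x) = 1 := by
    rw [Finset.sum_comm]
    have h1 : ∀ a, (∑ x : Q, ∑ b : A, σ (y :: l) a * τ (y :: l) a b * G.δ y a b x)
        = σ (y :: l) a := by
      intro a
      rw [Finset.sum_comm]
      have hb : ∀ b, (∑ x : Q, σ (y :: l) a * τ (y :: l) a b * G.δ y a b x)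
          = σ (y :: l) a * τ (y :: l) a b := by
        intro b
        simp only [mul_assoc, ← Finset.mul_sum]
        rw [hG.2 y a b, mul_one]
      simp only [hb, ← Finset.mul_sum, (hτ (y :: l) a).2, mul_one]
    have h1' : ∀ a ∈ Finset.univ, (∑ x : Q, ∑ b : A, σ (y :: l) a * τ (y :: l) a b * G.δ y a b x)
        = σ (y :: l) a := fun a _ => h1 a
    rw [Finset.sum_congr rfl h1', (hσ (y :: l)).2]
  rw [h2, one_mul]

lemma outSeq_succ (t : ℕ) (x : Q) :
    outSeq G d0 σ τ (t+1) x
      = ∑ y : Q, ∑ g : Fin t → Q, hprob G d0 σ τ (x :: y :: (List.ofFn g).reverse) := by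
  rw [outSeq]
  have e1 : (∑ h : Fin (t+1) → Q, hprob G d0 σ τ (x :: (List.ofFn h).reverse))
      = ∑ p : Q × (Fin t → Q), hprob G d0 σ τ (x :: p.1 :: (List.ofFn p.2).reverse) := by
    refine Fintype.sum_equiv (snocEquiv t Q) _ _ ?_
    intro h
    rw [ofFn_reverse_succ]
    rfl
  exact e1.trans (Fintype.sum_prod_type'
    (f := fun y g => hprob G d0 σ τ (x :: y :: (List.ofFn g).reverse)))

lemma outSeq_sum_one (hG : IsGame G) (hd : IsDist d0) (hσ : IsStrat1 σ) (hτ : IsStrat2 τ) :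
    ∀ t, ∑ x : Q, outSeq G d0 σ τ t x = 1 := by
  intro t
  induction t with
  | zero => simpa [outSeq, hprob] using hd.2
  | succ t ih =>
    simp only [outSeq_succ]
    rw [Finset.sum_comm]
    have : ∀ y : Q, (∑ x : Q, ∑ g : Fin t → Q, hprob G d0 σ τ (x :: y :: (List.ofFn g).reverse))
        = outSeq G d0 σ τ t y := by
      intro y
      rw [Finset.sum_comm, outSeq]
      exact Finset.sum_congr rfl fun g _ => sum_hprob_cons G d0 σ τ hG hσ hτ _ _
    rw [Finset.sum_congr rfl fun y _ => this y, ih]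

lemma mass_le_one (hG : IsGame G) (hd : IsDist d0) (hσ : IsStrat1 σ) (hτ : IsStrat2 τ)
    (t : ℕ) (T : Finset Q) : mass (outSeq G d0 σ τ t) T ≤ 1 := by
  have hnn : ∀ x, 0 ≤ outSeq G d0 σ τ t x := by
    intro x
    exact Finset.sum_nonneg fun h _ =>
      hprob_nonneg G d0 σ τ hG.1 hd.1 (fun h a => (hσ h).1 a) (fun h a b => (hτ h a).1 b) _
  calc mass (outSeq G d0 σ τ t) T ≤ ∑ x : Q, outSeq G d0 σ τ t x :=
        Finset.sum_le_sum_of_subset_of_nonneg (Finset.subset_univ T) (fun x _ _ => hnn x)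
    _ = 1 := outSeq_sum_one G d0 σ τ hG hd hσ hτ t

lemma isDist_dirac {Q' : Type} [Fintype Q'] [DecidableEq Q'] (x : Q') : IsDist (dirac x) := by
  constructor
  · intro y; unfold dirac; split <;> norm_num
  · simp [dirac]

end Basic

end AS12Aux
namespace AS12Aux
section Counter

variable {Q A : Type} [Fintype Q] [Fintype A] [DecidableEq Q]

/-- Value of the counter after `k` steps, having started at `i`. -/
def cnt (p : ℕ) (hp : 0 < p) (i : ℕ) (k : ℕ) : Fin p :=
  ⟨(i + (p-1)*k) % p, Nat.mod_lt _ hp⟩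

lemma cnt_succ (p : ℕ) (hp : 0 < p) (i k : ℕ) :
    ((cnt p hp i k : ℕ) + p - 1) % p = (cnt p hp i (k+1) : ℕ) := by
  have h1 : ((cnt p hp i k : ℕ) + p - 1) = (i + (p-1)*k) % p + (p - 1) := by
    simp only [cnt]
    omega
  rw [h1, Nat.mod_add_mod]
  simp only [cnt]
  congr 1
  ring

lemma cnt_zero (p : ℕ) (hp : 0 < p) (i : Fin p) : cnt p hp (i : ℕ) 0 = i := by
  simp [cnt, Fin.ext_iff, Nat.mod_eq_of_lt i.isLt]

/-- Annotate a (reverse-chronological) history with the deterministic counter values. -/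
def ann (p : ℕ) (hp : 0 < p) (i : ℕ) : List Q → List (Q × Fin p)
  | [] => []
  | x :: l => (x, cnt p hp i l.length) :: ann p hp i l

lemma map_fst_ann (p : ℕ) (hp : 0 < p) (i : ℕ) :
    ∀ l : List Q, (ann p hp i l).map Prod.fst = l
  | [] => rfl
  | x :: l => by rw [ann, List.map_cons, map_fst_ann p hp i l]

lemma ann_ofFn (p : ℕ) (hp : 0 < p) (i : ℕ) :
    ∀ (t : ℕ) (g : Fin t → Q),
      ann p hp i (List.ofFn g).reverse
        = (List.ofFn (fun j : Fin t => (g j, cnt p hp i j))).reverse := by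
  intro t
  induction t with
  | zero => intro g; simp [ann]
  | succ t ih =>
    intro g
    rw [ofFn_reverse_succ, ofFn_reverse_succ, ann]
    have hlen : (List.ofFn (Fin.init g)).reverse.length = t := by simp
    rw [hlen, ih (Fin.init g)]
    rfl

lemma ann_cons_ofFn (p : ℕ) (hp : 0 < p) (i : ℕ) (t : ℕ) (x : Q) (g : Fin t → Q) :
    ann p hp i (x :: (List.ofFn g).reverse)
      = (x, cnt p hp i t) :: (List.ofFn (fun j : Fin t => (g j, cnt p hp i j))).reverse := by
  rw [ann, ann_ofFn]
  congr 2
  simp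

end Counter
end AS12Aux
namespace AS12Aux
section CounterProb

variable {Q A : Type} [Fintype Q] [Fintype A] [DecidableEq Q]
  (G : Game Q A) (p : ℕ) (hp : 0 < p) (q : Q) (i : Fin p)
  (σ' : Strat1 (Q × Fin p) A) (τ' : Strat2 (Q × Fin p) A)

/-- Lemma A: along annotated histories, the counter game behaves as `G`. -/
lemma hprob_ann :
    ∀ l : List Q,
      hprob (counterGame G p) (dirac (q, i)) σ' τ' (ann p hp (i : ℕ) l)
        = hprob G (dirac q) (fun h => σ' (ann p hp (i : ℕ) h))
            (fun h => τ' (ann p hp (i : ℕ) h)) l := by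
  intro l
  induction l with
  | nil => rfl
  | cons x l ih =>
    match l, ih with
    | [], _ =>
      show dirac (q, i) (x, cnt p hp (i : ℕ) 0) = dirac q x
      rw [cnt_zero]
      simp [dirac, Prod.ext_iff]
    | y :: l', ih =>
      show (∑ a : A, ∑ b : A, σ' (ann p hp (i:ℕ) (y :: l')) a * τ' (ann p hp (i:ℕ) (y :: l')) a b *
            (counterGame G p).δ (y, cnt p hp (i:ℕ) l'.length) a b (x, cnt p hp (i:ℕ) (l'.length + 1))) *
          hprob (counterGame G p) (dirac (q, i)) σ' τ' (ann p hp (i:ℕ) (y :: l')) = _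
      rw [ih]
      have hδ : ∀ a b, (counterGame G p).δ (y, cnt p hp (i:ℕ) l'.length) a b
          (x, cnt p hp (i:ℕ) (l'.length + 1)) = G.δ y a b x := by
        intro a b
        simp only [counterGame]
        rw [if_pos]
        exact (cnt_succ p hp (i:ℕ) l'.length).symm
      simp only [hδ]
      rfl

/-- Lemma B: histories with wrong counters have probability zero. -/
lemma hprob_not_ann :
    ∀ H : List (Q × Fin p), H ≠ ann p hp (i : ℕ) (H.map Prod.fst) →
      hprob (counterGame G p) (dirac (q, i)) σ' τ' H = 0 := by
  intro H
  induction H with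
  | nil => intro h; exact absurd rfl h
  | cons x H ih =>
    match H, ih with
    | [], _ =>
      intro hne
      obtain ⟨x1, x2⟩ := x
      show dirac (q, i) (x1, x2) = 0
      have hx : (x1, x2) ≠ (q, i) := by
        intro hcontra
        apply hne
        rw [Prod.mk.injEq] at hcontra
        simp only [List.map_cons, List.map_nil, ann, List.length_nil]
        rw [cnt_zero, hcontra.2]
      simp [dirac, hx]
    | y :: H', ih =>
      intro hne
      by_cases htail : (y :: H') = ann p hp (i:ℕ) ((y :: H').map Prod.fst)
      · obtain ⟨x1, x2⟩ := x
        obtain ⟨y1, y2⟩ := y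
        simp only [List.map_cons] at htail
        have hy2 : y2 = cnt p hp (i:ℕ) H'.length := by
          have h0 := congrArg List.head? htail
          simp [ann] at h0
          exact h0
        have hx2 : (x2 : ℕ) ≠ ((cnt p hp (i:ℕ) H'.length : ℕ) + p - 1) % p := by
          rw [cnt_succ]
          intro hcontra
          apply hne
          simp only [List.map_cons]
          show ((x1, x2) :: (y1, y2) :: H')
              = (x1, cnt p hp (i:ℕ) (y1 :: List.map Prod.fst H').length)
                :: ann p hp (i:ℕ) (y1 :: List.map Prod.fst H')
          rw [← htail]
          have hl : (y1 :: List.map Prod.fst H').length = H'.length + 1 := by simp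
          rw [hl]
          have : x2 = cnt p hp (i:ℕ) (H'.length + 1) := Fin.ext hcontra
          rw [this]
        show (∑ a : A, ∑ b : A, σ' ((y1,y2) :: H') a * τ' ((y1,y2) :: H') a b *
            (counterGame G p).δ (y1, y2) a b (x1, x2)) *
            hprob (counterGame G p) (dirac (q, i)) σ' τ' ((y1,y2) :: H') = 0
        have hδ : ∀ a b, (counterGame G p).δ (y1, y2) a b (x1, x2) = 0 := by
          intro a b
          simp only [counterGame]
          rw [if_neg]
          rw [hy2]
          exact hx2
        simp [hδ]
      · show (∑ a : A, ∑ b : A, σ' (y :: H') a * τ' (y :: H') a b *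
            (counterGame G p).δ y a b x) *
            hprob (counterGame G p) (dirac (q, i)) σ' τ' (y :: H') = 0
        rw [ih htail, mul_zero]

end CounterProb
end AS12Aux
namespace AS12Aux
section CounterOut

variable {Q A : Type} [Fintype Q] [Fintype A] [DecidableEq Q]
  (G : Game Q A) (p : ℕ) (hp : 0 < p) (q : Q) (i : Fin p)
  (σ' : Strat1 (Q × Fin p) A) (τ' : Strat2 (Q × Fin p) A)

lemma outSeq_counter (t : ℕ) (x : Q) (c : Fin p) :
    outSeq (counterGame G p) (dirac (q, i)) σ' τ' t (x, c)
      = if c = cnt p hp (i : ℕ) t then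
          outSeq G (dirac q) (fun h => σ' (ann p hp (i : ℕ) h))
            (fun h => τ' (ann p hp (i : ℕ) h)) t x
        else 0 := by
  rw [outSeq]
  have e1 : (∑ h : Fin t → Q × Fin p,
        hprob (counterGame G p) (dirac (q, i)) σ' τ' ((x, c) :: (List.ofFn h).reverse))
      = ∑ ge : (Fin t → Q) × (Fin t → Fin p),
          hprob (counterGame G p) (dirac (q, i)) σ' τ'
            ((x, c) :: (List.ofFn (fun j => (ge.1 j, ge.2 j))).reverse) := by
    refine Fintype.sum_equiv (Equiv.arrowProdEquivProdArrow (Fin t) (fun _ => Q) (fun _ => Fin p)) _ _ ?_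
    intro h
    rfl
  rw [e1, Fintype.sum_prod_type]
  -- well-formedness of a candidate history
  have hform : ∀ (g : Fin t → Q) (e : Fin t → Fin p),
      ((x, c) :: (List.ofFn (fun j => (g j, e j))).reverse)
          = ann p hp (i:ℕ) (((x, c) :: (List.ofFn (fun j => (g j, e j))).reverse).map Prod.fst)
        ↔ (c = cnt p hp (i:ℕ) t ∧ ∀ j : Fin t, e j = cnt p hp (i:ℕ) (j : ℕ)) := by
    intro g e
    have hmap : (((x, c) :: (List.ofFn (fun j => (g j, e j))).reverse).map Prod.fst)
        = x :: (List.ofFn g).reverse := by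
      simp [List.map_reverse, List.map_ofFn]
      rfl
    rw [hmap, ann_cons_ofFn]
    constructor
    · intro hlist
      obtain ⟨hhead, htail2⟩ := List.cons_eq_cons.mp hlist
      refine ⟨congrArg Prod.snd hhead, fun j => ?_⟩
      exact congrArg Prod.snd
        (congrFun (List.ofFn_injective (List.reverse_injective htail2)) j)
    · rintro ⟨h1, h2⟩
      have : (fun j : Fin t => (g j, e j)) = fun j : Fin t => (g j, cnt p hp (i:ℕ) (j:ℕ)) := by
        funext j; rw [h2 j]
      rw [this, h1]
  by_cases hc : c = cnt p hp (i:ℕ) t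
  · rw [if_pos hc]
    have hinner : ∀ g : Fin t → Q,
        (∑ e : Fin t → Fin p, hprob (counterGame G p) (dirac (q, i)) σ' τ'
            ((x, c) :: (List.ofFn (fun j => (g j, e j))).reverse))
          = hprob G (dirac q) (fun h => σ' (ann p hp (i : ℕ) h))
              (fun h => τ' (ann p hp (i : ℕ) h)) (x :: (List.ofFn g).reverse) := by
      intro g
      rw [Fintype.sum_eq_single (fun j : Fin t => cnt p hp (i:ℕ) (j : ℕ))]
      · have hl : ((x, c) :: (List.ofFn (fun j : Fin t => (g j, cnt p hp (i:ℕ) (j:ℕ)))).reverse)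
            = ann p hp (i:ℕ) (x :: (List.ofFn g).reverse) := by
          rw [ann_cons_ofFn, hc]
        rw [hl, hprob_ann G p hp q i σ' τ']
      · intro e he
        exact hprob_not_ann G p hp q i σ' τ' _
          (fun hcontra => he (funext ((hform g e).1 hcontra).2))
    rw [Finset.sum_congr rfl fun g _ => hinner g]
    rfl
  · rw [if_neg hc]
    refine Finset.sum_eq_zero fun g _ => Finset.sum_eq_zero fun e _ => ?_
    show hprob (counterGame G p) (dirac (q, i)) σ' τ'
        ((x, c) :: (List.ofFn (fun j => (g j, e j))).reverse) = 0
    exact hprob_not_ann G p hp q i σ' τ' _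
      (fun hcontra => hc ((hform g e).1 hcontra).1)

lemma mass_counter (t : ℕ) (T : Finset Q) :
    mass (outSeq (counterGame G p) (dirac (q, i)) σ' τ' t)
        (T.image (fun q' => ((q', ⟨0, hp⟩) : Q × Fin p)))
      = if cnt p hp (i : ℕ) t = ⟨0, hp⟩ then
          mass (outSeq G (dirac q) (fun h => σ' (ann p hp (i : ℕ) h))
            (fun h => τ' (ann p hp (i : ℕ) h)) t) T
        else 0 := by
  rw [mass, Finset.sum_image (by intro a _ b _ hab; exact (Prod.mk.injEq _ _ _ _ ▸ hab).1)]
  have : ∀ x ∈ T, outSeq (counterGame G p) (dirac (q, i)) σ' τ' t (x, ⟨0, hp⟩)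
      = if cnt p hp (i : ℕ) t = ⟨0, hp⟩ then
          outSeq G (dirac q) (fun h => σ' (ann p hp (i : ℕ) h))
            (fun h => τ' (ann p hp (i : ℕ) h)) t x
        else 0 := by
    intro x _
    rw [outSeq_counter G p hp q i σ' τ']
    by_cases hc : cnt p hp (i:ℕ) t = ⟨0, hp⟩
    · rw [if_pos hc, if_pos hc.symm]
    · rw [if_neg hc, if_neg (fun h => hc h.symm)]
  rw [Finset.sum_congr rfl this]
  by_cases hc : cnt p hp (i:ℕ) t = ⟨0, hp⟩
  · simp only [if_pos hc, mass]
  · simp only [if_neg hc, Finset.sum_const_zero]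

end CounterOut
end AS12Aux
namespace AS12Aux
section Mix

variable {Q A : Type} [Fintype Q] [Fintype A] (G : Game Q A) (d0 : Q → ℝ)
  (σ : Strat1 Q A) {n : ℕ} (τs : Fin n → Strat2 Q A) (dft : Strat2 Q A)

/-- Behavioral mixture of the strategies `τs`, weighted by the realization probabilities. -/
noncomputable def mix : Strat2 Q A := fun h a b =>
  if (∑ j, hprob G d0 σ (τs j) h) = 0 then dft h a b
  else (∑ j, hprob G d0 σ (τs j) h * τs j h a b) / (∑ j, hprob G d0 σ (τs j) h)

variable (hG : IsGame G) (hd : ∀ x, 0 ≤ d0 x) (hσ : IsStrat1 σ)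
  (hτs : ∀ j, IsStrat2 (τs j)) (hdft : IsStrat2 dft)

include hG hd hσ hτs hdft in
lemma isStrat2_mix : IsStrat2 (mix G d0 σ τs dft) := by
  intro h a
  have hw : ∀ j, 0 ≤ hprob G d0 σ (τs j) h := fun j =>
    hprob_nonneg G d0 σ (τs j) hG.1 hd (fun h a => (hσ h).1 a) (fun h a b => ((hτs j) h a).1 b) h
  by_cases hS : (∑ j, hprob G d0 σ (τs j) h) = 0
  · constructor
    · intro b; simp only [mix, if_pos hS]; exact (hdft h a).1 b
    · simp only [mix, if_pos hS]; exact (hdft h a).2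
  · have hSpos : 0 < ∑ j, hprob G d0 σ (τs j) h :=
      lt_of_le_of_ne (Finset.sum_nonneg fun j _ => hw j) (Ne.symm hS)
    constructor
    · intro b
      simp only [mix, if_neg hS]
      exact div_nonneg (Finset.sum_nonneg fun j _ =>
        mul_nonneg (hw j) (((hτs j) h a).1 b)) hSpos.le
    · simp only [mix, if_neg hS]
      rw [← Finset.sum_div]
      rw [Finset.sum_comm]
      have : ∀ j, (∑ b : A, hprob G d0 σ (τs j) h * τs j h a b) = hprob G d0 σ (τs j) h := by
        intro j
        rw [← Finset.mul_sum, ((hτs j) h a).2, mul_one]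
      rw [Finset.sum_congr rfl fun j _ => this j]
      exact div_self hS

include hG hd hσ hτs hdft in
lemma hprob_mix :
    ∀ l, (n : ℝ) * hprob G d0 σ (mix G d0 σ τs dft) l = ∑ j, hprob G d0 σ (τs j) l := by
  intro l
  induction l with
  | nil => simp [hprob]
  | cons x l ih =>
    match l, ih with
    | [], _ =>
      show (n : ℝ) * d0 x = ∑ j : Fin n, d0 x
      simp [Finset.sum_const, mul_comm]
    | y :: l', ih =>
      have hw : ∀ j, 0 ≤ hprob G d0 σ (τs j) (y :: l') := fun j =>
        hprob_nonneg G d0 σ (τs j) hG.1 hd (fun h a => (hσ h).1 a)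
          (fun h a b => ((hτs j) h a).1 b) _
      set S := ∑ j, hprob G d0 σ (τs j) (y :: l') with hSdef
      have hstep : ∀ (τ : Strat2 Q A), hprob G d0 σ τ (x :: y :: l')
          = (∑ a : A, ∑ b : A, σ (y :: l') a * τ (y :: l') a b * G.δ y a b x) *
              hprob G d0 σ τ (y :: l') := fun τ => rfl
      rw [hstep, ← mul_assoc, mul_comm (n:ℝ), mul_assoc, ih]
      by_cases hS : S = 0
      · have hz : ∀ j, hprob G d0 σ (τs j) (y :: l') = 0 := by
          have hS' : (∑ j, hprob G d0 σ (τs j) (y :: l')) = 0 := hSdef ▸ hS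
          intro j
          exact (Finset.sum_eq_zero_iff_of_nonneg (fun j _ => hw j)).1 hS' j (Finset.mem_univ j)
        rw [hS, mul_zero]
        symm
        refine Finset.sum_eq_zero fun j _ => ?_
        rw [hstep, hz j, mul_zero]
      · have hmix : ∀ a b, mix G d0 σ τs dft (y :: l') a b
            = (∑ j, hprob G d0 σ (τs j) (y :: l') * τs j (y :: l') a b) / S := by
          intro a b
          simp only [mix, ← hSdef, if_neg hS]
        simp only [hmix]
        rw [Finset.sum_mul]
        have houter : ∀ a : A,
            (∑ b : A, σ (y :: l') a *
              ((∑ j, hprob G d0 σ (τs j) (y :: l') * τs j (y :: l') a b) / S) * G.δ y a b x) * S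
            = ∑ j, hprob G d0 σ (τs j) (y :: l') *
                ∑ b : A, σ (y :: l') a * τs j (y :: l') a b * G.δ y a b x := by
          intro a
          rw [Finset.sum_mul]
          have hb : ∀ b : A, σ (y :: l') a *
              ((∑ j, hprob G d0 σ (τs j) (y :: l') * τs j (y :: l') a b) / S) * G.δ y a b x * S
              = ∑ j, hprob G d0 σ (τs j) (y :: l') *
                  (σ (y :: l') a * τs j (y :: l') a b * G.δ y a b x) := by
            intro b
            calc σ (y :: l') a *
                ((∑ j, hprob G d0 σ (τs j) (y :: l') * τs j (y :: l') a b) / S) * G.δ y a b x * S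
                = ((∑ j, hprob G d0 σ (τs j) (y :: l') * τs j (y :: l') a b) / S * S) *
                    (σ (y :: l') a * G.δ y a b x) := by ring
              _ = (∑ j, hprob G d0 σ (τs j) (y :: l') * τs j (y :: l') a b) *
                    (σ (y :: l') a * G.δ y a b x) := by rw [div_mul_cancel₀ _ hS]
              _ = _ := by
                    rw [Finset.sum_mul]
                    exact Finset.sum_congr rfl fun j _ => by ring
          rw [Finset.sum_congr rfl fun b _ => hb b, Finset.sum_comm]
          exact Finset.sum_congr rfl fun j _ => (Finset.mul_sum _ _ _).symm
        rw [Finset.sum_congr rfl fun a _ => houter a, Finset.sum_comm]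
        symm
        refine Finset.sum_congr rfl fun j _ => ?_
        rw [hstep (τs j), ← Finset.mul_sum, mul_comm]

include hG hd hσ hτs hdft in
lemma mass_mix (t : ℕ) (T : Finset Q) :
    (n : ℝ) * mass (outSeq G d0 σ (mix G d0 σ τs dft) t) T
      = ∑ j, mass (outSeq G d0 σ (τs j) t) T := by
  rw [mass, Finset.mul_sum]
  have hx : ∀ x : Q, (n : ℝ) * outSeq G d0 σ (mix G d0 σ τs dft) t x
      = ∑ j, outSeq G d0 σ (τs j) t x := by
    intro x
    rw [outSeq, Finset.mul_sum]
    rw [Finset.sum_congr rfl fun h _ => hprob_mix G d0 σ τs dft hG hd hσ hτs hdft _]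
    rw [Finset.sum_comm]
    rfl
  rw [Finset.sum_congr rfl fun x _ => hx x, Finset.sum_comm]
  rfl

end Mix
end AS12Aux
namespace AS12Aux

lemma forward_dir {Q A : Type} [Fintype Q] [Fintype A] [DecidableEq Q]
    (G : Game Q A) (hG : IsGame G) (q : Q) (T : Finset Q) :
    dirac q ∈ ASWin G T WeaklySync →
      ∀ (p : ℕ) (hp : 0 < p), ∃ i : Fin p,
        dirac ((q, i) : Q × Fin p) ∈
          ASWin (counterGame G p)
            (T.image (fun q' => ((q', ⟨0, hp⟩) : Q × Fin p))) WeaklySync := by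
  rintro ⟨hdist, σ, hσ, hws⟩
  intro p hp
  by_contra hcon
  simp only [ASWin, Set.mem_setOf_eq, WeaklySync, not_exists] at hcon
  push_neg at hcon
  haveI : NeZero p := ⟨hp.ne'⟩
  set σp : Strat1 (Q × Fin p) A := fun h a => σ (h.map Prod.fst) a with hσpdef
  have hσp1 : IsStrat1 σp := fun h => hσ _
  choose τ' hτ' ε hε N hN using fun i : Fin p => hcon i (isDist_dirac _) σp hσp1
  -- project the spoiling strategies back to `G`
  set τi : Fin p → Strat2 Q A :=
    fun i h a b => τ' i (ann p hp ((i : Fin p) : ℕ) h) a b with hτidef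
  have hτi : ∀ i, IsStrat2 (τi i) := fun i h a => hτ' i _ _
  have hσeq : ∀ i : Fin p, (fun h => σp (ann p hp ((i : Fin p) : ℕ) h)) = σ := by
    intro i
    funext h
    show σ ((ann p hp ((i : Fin p) : ℕ) h).map Prod.fst) = σ h
    rw [map_fst_ann]
  have hkey : ∀ (i : Fin p) (t : ℕ),
      mass (outSeq (counterGame G p) (dirac (q, i)) σp (τ' i) t)
          (T.image (fun q' => ((q', ⟨0, hp⟩) : Q × Fin p)))
        = if cnt p hp ((i : Fin p) : ℕ) t = ⟨0, hp⟩ then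
            mass (outSeq G (dirac q) σ (τi i) t) T else 0 := by
    intro i t
    rw [mass_counter G p hp q i σp (τ' i) t T, hσeq i]
  -- the mixture of the projected spoilers
  set τm : Strat2 Q A := mix G (dirac q) σ τi (τi 0) with hτmdef
  have hτm : IsStrat2 τm :=
    isStrat2_mix G (dirac q) σ τi (τi 0) hG (isDist_dirac q).1 hσ hτi (hτi 0)
  have hmassmix : ∀ t, (p : ℝ) * mass (outSeq G (dirac q) σ τm t) T
      = ∑ j, mass (outSeq G (dirac q) σ (τi j) t) T := fun t =>
    mass_mix G (dirac q) σ τi (τi 0) hG (isDist_dirac q).1 hσ hτi (hτi 0) t T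
  -- the minimum spoiling margin
  haveI : Nonempty (Fin p) := ⟨0⟩
  set εm : ℝ := Finset.univ.inf' Finset.univ_nonempty ε with hεmdef
  have hεmpos : 0 < εm :=
    (Finset.lt_inf'_iff _).2 fun i _ => hε i
  have hppos : (0 : ℝ) < p := by exact_mod_cast hp
  have h2ppos : (0 : ℝ) < 2 * p := by linarith
  obtain ⟨t, htN, hmt⟩ := hws τm hτm (εm / (2 * p)) (div_pos hεmpos h2ppos) (Finset.univ.sup N)
  set i : Fin p := ⟨t % p, Nat.mod_lt t hp⟩ with hidef
  have hcnt : cnt p hp ((i : Fin p) : ℕ) t = ⟨0, hp⟩ := by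
    have hmod : ((i : Fin p) : ℕ) = t % p := rfl
    apply Fin.ext
    show (t % p + (p - 1) * t) % p = 0
    have h1 : (t % p + (p - 1) * t) % p = (t + (p - 1) * t) % p :=
      Nat.ModEq.add_right ((p - 1) * t) (Nat.mod_modEq t p)
    obtain ⟨m, rfl⟩ : ∃ m, p = m + 1 := ⟨p - 1, by omega⟩
    rw [h1]
    have h2 : t + (m + 1 - 1) * t = (m + 1) * t := by rw [Nat.add_sub_cancel]; ring
    rw [h2, Nat.mul_mod_right]
  have htNi : N i ≤ t := le_trans (Finset.le_sup (Finset.mem_univ i)) htN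
  have hilt : mass (outSeq G (dirac q) σ (τi i) t) T < 1 - ε i := by
    have h3 := hN i t htNi
    rw [hkey i t, if_pos hcnt] at h3
    exact h3
  have hub : ∀ j : Fin p, mass (outSeq G (dirac q) σ (τi j) t) T ≤ 1 := fun j =>
    mass_le_one G (dirac q) σ (τi j) hG (isDist_dirac q) hσ (hτi j) t T
  have hεmle : εm ≤ ε i := Finset.inf'_le _ (Finset.mem_univ i)
  -- sum bound
  have hsum : ∑ j, mass (outSeq G (dirac q) σ (τi j) t) T ≤ (p : ℝ) - εm := by
    rw [← Finset.add_sum_erase _ _ (Finset.mem_univ i)]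
    have h4 : ∑ j ∈ Finset.univ.erase i, mass (outSeq G (dirac q) σ (τi j) t) T
        ≤ (Finset.univ.erase i).card • (1 : ℝ) :=
      Finset.sum_le_card_nsmul _ _ 1 fun j _ => hub j
    have h5 : ((Finset.univ.erase i).card : ℝ) = (p : ℝ) - 1 := by
      rw [Finset.card_erase_of_mem (Finset.mem_univ i)]
      simp only [Finset.card_univ, Fintype.card_fin]
      have : 1 ≤ p := hp
      push_cast [Nat.cast_sub this]
      ring
    rw [nsmul_eq_mul, mul_one] at h4
    rw [h5] at h4
    linarith
  have hfin : (p : ℝ) * mass (outSeq G (dirac q) σ τm t) T ≤ (p : ℝ) - εm := by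
    rw [hmassmix t]; exact hsum
  have hlb : 1 - εm / (2 * p) ≤ mass (outSeq G (dirac q) σ τm t) T := hmt
  have hdiv : (p : ℝ) * (εm / (2 * p)) = εm / 2 := by field_simp
  have hmul := mul_le_mul_of_nonneg_left hlb hppos.le
  rw [mul_sub, mul_one, hdiv] at hmul
  linarith

end AS12Aux
namespace AS12Aux

lemma backward_dir {Q A : Type} [Fintype Q] [Fintype A] [DecidableEq Q]
    (G : Game Q A) (q : Q) (T : Finset Q) :
    (∀ (p : ℕ) (hp : 0 < p), ∃ i : Fin p,
        dirac ((q, i) : Q × Fin p) ∈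
          ASWin (counterGame G p)
            (T.image (fun q' => ((q', ⟨0, hp⟩) : Q × Fin p))) WeaklySync) →
      dirac q ∈ ASWin G T WeaklySync := by
  intro hR
  obtain ⟨i, hdist', σ', hσ', hws'⟩ := hR 1 one_pos
  refine ⟨isDist_dirac q, fun h a => σ' (ann 1 one_pos ((i : Fin 1) : ℕ) h) a,
    fun h => hσ' _, ?_⟩
  intro τ hτ ε hε
  have hτ2 : IsStrat2 (fun (H : List (Q × Fin 1)) a b => τ (H.map Prod.fst) a b) :=
    fun H a => hτ _ _
  have hw := hws' _ hτ2 ε hε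
  have hm : ∀ t, mass (outSeq (counterGame G 1) (dirac (q, i)) σ'
        (fun H a b => τ (H.map Prod.fst) a b) t)
        (T.image (fun q' => ((q', ⟨0, one_pos⟩) : Q × Fin 1)))
      = mass (outSeq G (dirac q)
          (fun h a => σ' (ann 1 one_pos ((i : Fin 1) : ℕ) h) a) τ t) T := by
    intro t
    rw [mass_counter G 1 one_pos q i σ' _ t T, if_pos (Subsingleton.elim _ _)]
    have hτeq : (fun h => (fun (H : List (Q × Fin 1)) a b => τ (H.map Prod.fst) a b)
        (ann 1 one_pos ((i : Fin 1) : ℕ) h)) = τ := by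
      funext h
      show τ ((ann 1 one_pos ((i : Fin 1) : ℕ) h).map Prod.fst) = τ h
      rw [map_fst_ann]
    rw [hτeq]
  intro M
  obtain ⟨t, h1, h2⟩ := hw M
  refine ⟨t, h1, ?_⟩
  show 1 - ε ≤ mass (outSeq G (dirac q)
      (fun h a => σ' (ann 1 one_pos ((i : Fin 1) : ℕ) h) a) τ t) T
  rw [← hm t]
  exact h2

end AS12Aux
/-- player 1 is almost-sure weakly synchronizing in `T` from `q` in `G`
iff for all `p ≥ 1` there exists `0 ≤ i ≤ p-1` such that player 1 is almost-sure
weakly synchronizing in `T × {0}` from `⟨q, i⟩` in `G × [p]`. -/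
theorem as_weakly_iff_counter_game {Q A : Type} [Fintype Q] [Fintype A] [DecidableEq Q]
    (G : Game Q A) (hG : IsGame G) (q : Q) (T : Finset Q) :
    dirac q ∈ ASWin G T WeaklySync ↔
      ∀ (p : ℕ) (hp : 0 < p), ∃ i : Fin p,
        dirac ((q, i) : Q × Fin p) ∈
          ASWin (counterGame G p)
            (T.image (fun q' => ((q', ⟨0, hp⟩) : Q × Fin p))) WeaklySync :=
  ⟨AS12Aux.forward_dir G hG q T, AS12Aux.backward_dir G q T⟩
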